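/- Let A¹ = (a_{ij}) be a symmetric real 2×2 matrix and take A² = 0 (the case of a surface M² contained in ℝ³ ⊂ ℝ⁴, whose spinor bundle S(ℝ³) is the restriction of S±(ℝ⁴)). In the octonions 𝕆, for (t₁, t₂) ∈ ℝ² define E₁ = 𝐞 + (t₁/2)·𝐢·(a₁₂𝐣 + a₁₁𝐤) + (t₂/2)·𝐢·(−a₁₁𝐣 + a₁₂𝐤), E₂ = 𝐢𝐞 + (t₁/2)·𝐢·(a₂₂𝐣 + a₁₂𝐤) + (t₂/2)·𝐢·(−a₁₂𝐣 + a₂₂𝐤), F₁ = 𝟏, F₂ = 𝐢 (all products octonionic). Then the imaginary part of the octonion Ē₁·(E₂·(F̄₁·F₂)) vanishes for every (t₁, t₂) ∈ ℝ² if and only if trace A¹ = a₁₁ + a₂₂ = 0. (This is the pointwise statement that the total spaces of the eigenbundles V±ⱼ of the spinor bundle S(ℝ³) ≅ ℝ⁷ over a surface M² ⊂ ℝ³ are coassociative in ℝ⁷ if and only if M² is minimal in ℝ³.) -/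

import Mathlib

noncomputable section

/-- The octonions as pairs of quaternions, `𝕆 = ℍ × ℍ`. -/
abbrev Octo := Quaternion ℝ × Quaternion ℝ

/-- Cayley–Dickson multiplication `(a,b)·(c,d) = (ac − d̄b, da + bc̄)`. -/
def omul (x y : Octo) : Octo :=
  (x.1 * y.1 - star y.2 * x.2, y.2 * x.1 + x.2 * star y.1)

/-- Octonion conjugation `(a,b)‾ = (ā, −b)`. -/
def oconj (x : Octo) : Octo := (star x.1, -x.2)

/-- Imaginary part `Im x = (x − x̄)/2`. -/
def oim (x : Octo) : Octo := (2⁻¹ : ℝ) • (x - oconj x)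

def o1 : Octo := (1, 0)
def oI : Octo := (⟨0, 1, 0, 0⟩, 0)
def oJ : Octo := (⟨0, 0, 1, 0⟩, 0)
def oK : Octo := (⟨0, 0, 0, 1⟩, 0)
def oE : Octo := (0, 1)
def oIE : Octo := (0, ⟨0, 1, 0, 0⟩)

/-- `E₁ = 𝐞 + (t₁/2)𝐢(a₁₂𝐣 + a₁₁𝐤) + (t₂/2)𝐢(−a₁₁𝐣 + a₁₂𝐤)` (the case `A² = 0`
of a surface `M² ⊂ ℝ³ ⊂ ℝ⁴`). -/
def spinE1 (A1 : Matrix (Fin 2) (Fin 2) ℝ) (t1 t2 : ℝ) : Octo :=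
  oE + (t1 / 2) • omul oI (A1 0 1 • oJ + A1 0 0 • oK)
     + (t2 / 2) • omul oI ((-(A1 0 0)) • oJ + A1 0 1 • oK)

/-- `E₂ = 𝐢𝐞 + (t₁/2)𝐢(a₂₂𝐣 + a₁₂𝐤) + (t₂/2)𝐢(−a₁₂𝐣 + a₂₂𝐤)`. -/
def spinE2 (A1 : Matrix (Fin 2) (Fin 2) ℝ) (t1 t2 : ℝ) : Octo :=
  oIE + (t1 / 2) • omul oI (A1 1 1 • oJ + A1 0 1 • oK)
      + (t2 / 2) • omul oI ((-(A1 0 1)) • oJ + A1 1 1 • oK)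


namespace Stmt19Aux

open Quaternion

local notation "QM" => @HMul.hMul (Quaternion ℝ) (Quaternion ℝ) (Quaternion ℝ) _

@[simp] lemma qmul_mk (a1 a2 a3 a4 c1 c2 c3 c4 : ℝ) :
    QM (⟨a1,a2,a3,a4⟩ : Quaternion ℝ) (⟨c1,c2,c3,c4⟩ : Quaternion ℝ) =
    (⟨a1*c1 - a2*c2 - a3*c3 - a4*c4, a1*c2 + a2*c1 + a3*c4 - a4*c3,
      a1*c3 - a2*c4 + a3*c1 + a4*c2, a1*c4 + a2*c3 - a3*c2 + a4*c1⟩ : Quaternion ℝ) :=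
  Quaternion.ext _ _ (Quaternion.re_mul _ _) (Quaternion.imI_mul _ _)
    (Quaternion.imJ_mul _ _) (Quaternion.imK_mul _ _)

@[simp] lemma qstar_mk (a1 a2 a3 a4 : ℝ) :
    @star (Quaternion ℝ) _ (⟨a1,a2,a3,a4⟩ : Quaternion ℝ) = (⟨a1,-a2,-a3,-a4⟩ : Quaternion ℝ) :=
  Quaternion.ext _ _ (Quaternion.re_star _) (Quaternion.imI_star _)
    (Quaternion.imJ_star _) (Quaternion.imK_star _)

@[simp] lemma qadd_mk (a1 a2 a3 a4 c1 c2 c3 c4 : ℝ) :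
    @HAdd.hAdd (Quaternion ℝ) (Quaternion ℝ) (Quaternion ℝ) _
      (⟨a1,a2,a3,a4⟩ : Quaternion ℝ) (⟨c1,c2,c3,c4⟩ : Quaternion ℝ) =
    (⟨a1+c1, a2+c2, a3+c3, a4+c4⟩ : Quaternion ℝ) :=
  Quaternion.ext _ _ (Quaternion.re_add _ _) (Quaternion.imI_add _ _)
    (Quaternion.imJ_add _ _) (Quaternion.imK_add _ _)

@[simp] lemma qsub_mk (a1 a2 a3 a4 c1 c2 c3 c4 : ℝ) :
    @HSub.hSub (Quaternion ℝ) (Quaternion ℝ) (Quaternion ℝ) _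
      (⟨a1,a2,a3,a4⟩ : Quaternion ℝ) (⟨c1,c2,c3,c4⟩ : Quaternion ℝ) =
    (⟨a1-c1, a2-c2, a3-c3, a4-c4⟩ : Quaternion ℝ) :=
  Quaternion.ext _ _ (Quaternion.re_sub _ _) (Quaternion.imI_sub _ _)
    (Quaternion.imJ_sub _ _) (Quaternion.imK_sub _ _)

@[simp] lemma qneg_mk (a1 a2 a3 a4 : ℝ) :
    @Neg.neg (Quaternion ℝ) _ (⟨a1,a2,a3,a4⟩ : Quaternion ℝ) = (⟨-a1,-a2,-a3,-a4⟩ : Quaternion ℝ) :=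
  Quaternion.ext _ _ (Quaternion.re_neg _) (Quaternion.imI_neg _)
    (Quaternion.imJ_neg _) (Quaternion.imK_neg _)

@[simp] lemma qsmul_mk (r a1 a2 a3 a4 : ℝ) :
    @HSMul.hSMul ℝ (Quaternion ℝ) (Quaternion ℝ) _ r (⟨a1,a2,a3,a4⟩ : Quaternion ℝ) =
    (⟨r*a1, r*a2, r*a3, r*a4⟩ : Quaternion ℝ) :=
  Quaternion.ext _ _ (Quaternion.re_smul _ _) (Quaternion.imI_smul _ _)
    (Quaternion.imJ_smul _ _) (Quaternion.imK_smul _ _)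

@[simp] lemma qzero_mk : (0 : Quaternion ℝ) = (⟨0,0,0,0⟩ : Quaternion ℝ) := rfl

@[simp] lemma qone_mk : (1 : Quaternion ℝ) = (⟨1,0,0,0⟩ : Quaternion ℝ) := rfl


lemma omul_mk (a1 a2 a3 a4 b1 b2 b3 b4 c1 c2 c3 c4 d1 d2 d3 d4 : ℝ) :
    omul ((⟨a1,a2,a3,a4⟩ : Quaternion ℝ), (⟨b1,b2,b3,b4⟩ : Quaternion ℝ))
         ((⟨c1,c2,c3,c4⟩ : Quaternion ℝ), (⟨d1,d2,d3,d4⟩ : Quaternion ℝ)) =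
    ((⟨a1*c1 - a2*c2 - a3*c3 - a4*c4 - b1*d1 - b2*d2 - b3*d3 - b4*d4,
       a1*c2 + a2*c1 + a3*c4 - a4*c3 - b2*d1 + b1*d2 + b4*d3 - b3*d4,
       a1*c3 - a2*c4 + a3*c1 + a4*c2 - b3*d1 - b4*d2 + b1*d3 + b2*d4,
       a1*c4 + a2*c3 - a3*c2 + a4*c1 - b4*d1 + b3*d2 - b2*d3 + b1*d4⟩ : Quaternion ℝ),
     (⟨a1*d1 - a2*d2 - a3*d3 - a4*d4 + b1*c1 + b2*c2 + b3*c3 + b4*c4,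
       a2*d1 + a1*d2 + a4*d3 - a3*d4 - b1*c2 + b2*c1 - b3*c4 + b4*c3,
       a3*d1 - a4*d2 + a1*d3 + a2*d4 - b1*c3 + b2*c4 + b3*c1 - b4*c2,
       a4*d1 + a3*d2 - a2*d3 + a1*d4 - b1*c4 - b2*c3 + b3*c2 + b4*c1⟩ : Quaternion ℝ)) := by
  refine Prod.ext ?_ ?_ <;> apply Quaternion.ext <;> simp [omul] <;> ring

lemma oconj_mk (a1 a2 a3 a4 b1 b2 b3 b4 : ℝ) :
    oconj ((⟨a1,a2,a3,a4⟩ : Quaternion ℝ), (⟨b1,b2,b3,b4⟩ : Quaternion ℝ)) =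
    ((⟨a1,-a2,-a3,-a4⟩ : Quaternion ℝ), (⟨-b1,-b2,-b3,-b4⟩ : Quaternion ℝ)) := by
  refine Prod.ext ?_ ?_ <;> apply Quaternion.ext <;> simp [oconj]

lemma oim_mk (a1 a2 a3 a4 b1 b2 b3 b4 : ℝ) :
    oim ((⟨a1,a2,a3,a4⟩ : Quaternion ℝ), (⟨b1,b2,b3,b4⟩ : Quaternion ℝ)) =
    ((⟨0, a2, a3, a4⟩ : Quaternion ℝ), (⟨b1, b2, b3, b4⟩ : Quaternion ℝ)) := by
  refine Prod.ext ?_ ?_ <;> apply Quaternion.ext <;>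
    simp [oim, oconj, smul_eq_mul] <;> ring

lemma o1_mk : o1 = ((⟨1,0,0,0⟩ : Quaternion ℝ), (⟨0,0,0,0⟩ : Quaternion ℝ)) := by
  refine Prod.ext ?_ ?_ <;> apply Quaternion.ext <;> simp [o1]

lemma oI_mk : oI = ((⟨0,1,0,0⟩ : Quaternion ℝ), (⟨0,0,0,0⟩ : Quaternion ℝ)) := by
  refine Prod.ext ?_ ?_ <;> apply Quaternion.ext <;> simp [oI]

lemma ozero_mk : (0 : Octo) = ((⟨0,0,0,0⟩ : Quaternion ℝ), (⟨0,0,0,0⟩ : Quaternion ℝ)) := by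
  refine Prod.ext ?_ ?_ <;> apply Quaternion.ext <;> simp

lemma spinE1_mk (A1 : Matrix (Fin 2) (Fin 2) ℝ) (t1 t2 : ℝ) :
    spinE1 A1 t1 t2 =
    ((⟨0, 0, -(t1/2)*A1 0 0 - (t2/2)*A1 0 1, (t1/2)*A1 0 1 - (t2/2)*A1 0 0⟩ : Quaternion ℝ),
     (⟨1, 0, 0, 0⟩ : Quaternion ℝ)) := by
  refine Prod.ext ?_ ?_ <;> apply Quaternion.ext <;>
    simp [spinE1, omul, oE, oI, oJ, oK, smul_eq_mul] <;> ring

lemma spinE2_mk (A1 : Matrix (Fin 2) (Fin 2) ℝ) (t1 t2 : ℝ) :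
    spinE2 A1 t1 t2 =
    ((⟨0, 0, -(t1/2)*A1 0 1 - (t2/2)*A1 1 1, (t1/2)*A1 1 1 - (t2/2)*A1 0 1⟩ : Quaternion ℝ),
     (⟨0, 1, 0, 0⟩ : Quaternion ℝ)) := by
  refine Prod.ext ?_ ?_ <;> apply Quaternion.ext <;>
    simp [spinE2, omul, oIE, oI, oJ, oK, smul_eq_mul] <;> ring

lemma key (A1 : Matrix (Fin 2) (Fin 2) ℝ) (t1 t2 : ℝ) :
    oim (omul (oconj (spinE1 A1 t1 t2))
        (omul (spinE2 A1 t1 t2) (omul (oconj o1) oI))) =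
    ((⟨0, (t1^2 + t2^2) * (A1 0 0 * A1 0 1 + A1 0 1 * A1 1 1) / 4, 0, 0⟩ : Quaternion ℝ),
     (⟨0, 0, (A1 0 0 + A1 1 1) * t1 / 2, (A1 0 0 + A1 1 1) * t2 / 2⟩ : Quaternion ℝ)) := by
  rw [spinE1_mk, spinE2_mk]
  refine Prod.ext ?_ ?_ <;> apply Quaternion.ext <;>
    simp [oim, oconj, omul, o1, oI] <;> ring

end Stmt19Aux

/-- the pointwise statement that the eigenbundles `V±ⱼ` of the
spinor bundle `S(ℝ³) ≅ ℝ⁷` over a surface `M² ⊂ ℝ³` are coassociative in `ℝ⁷`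
iff `M²` is minimal in `ℝ³`: with `A² = 0`, the imaginary part of the four-fold
product `Ē₁(E₂(F̄₁F₂))` vanishes for all `(t₁,t₂)` iff `trace A¹ = 0`. -/
theorem stmt19 (A1 : Matrix (Fin 2) (Fin 2) ℝ) (hA1 : A1.IsSymm) :
    (∀ t1 t2 : ℝ,
      oim (omul (oconj (spinE1 A1 t1 t2))
        (omul (spinE2 A1 t1 t2) (omul (oconj o1) oI))) = 0) ↔
    A1 0 0 + A1 1 1 = 0 := by
  constructor
  · intro h
    have h1 := (Stmt19Aux.key A1 1 0).symm.trans (h 1 0)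
    erw [Stmt19Aux.ozero_mk, Prod.mk.injEq, Quaternion.ext_iff, Quaternion.ext_iff] at h1
    have := h1.2.2.2.1
    dsimp at this
    linarith
  · intro h t1 t2
    erw [Stmt19Aux.key, Stmt19Aux.ozero_mk, Prod.mk.injEq,
      Quaternion.ext_iff, Quaternion.ext_iff]
    have hb : A1 0 0 * A1 0 1 + A1 0 1 * A1 1 1 = A1 0 1 * (A1 0 0 + A1 1 1) := by ring
    refine ⟨⟨rfl, ?_, rfl, rfl⟩, rfl, rfl, ?_, ?_⟩ <;> simp [hb, h]
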